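/- arXiv:2203.06703 — 14 statements merged into one kernel-verified Lean document; each statement's English description precedes it below -/
import Mathlib

section
/- Assume: (i) for each β ∈ [0,1] the set {(θ,y) ∈ 𝕋 × 𝕐 : π_y(θ) ≤ β} is measurable and the strong validity bound holds, namely (Q ⊗ P){(θ,y) : π_y(θ) ≤ β} ≤ β for every Q ∈ 𝒬 and β ∈ [0,1]. For α ∈ [0,1] define the 100(1−α)% plausibility region C_α(y) = ⋂ {A ⊆ 𝕋 : 1 − Π̄_y(Aᶜ) > 1 − α}. Then the non-coverage event {(θ,y) : θ ∉ C_α(y)} is equal to {(θ,y) : π_y(θ) < α}, and consequently (Q ⊗ P){(θ,y) : θ ∉ C_α(y)} ≤ α for every Q ∈ 𝒬, i.e., C_α is a 100(1−α)% confidence region relative to 𝒬. -/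
open MeasureTheory ProbabilityTheory Set
open scoped ENNReal

/-- The `100(1-α)%` plausibility region
`C_α(y) = ⋂ {A ⊆ 𝕋 : 1 - Π̄_y(Aᶜ) > 1 - α}`. -/
noncomputable def plausRegion {𝕋 𝕐 : Type*} (Pi : 𝕐 → Set 𝕋 → ℝ≥0∞) (α : ℝ≥0∞)
    (y : 𝕐) : Set 𝕋 :=
  ⋂₀ {A : Set 𝕋 | 1 - α < 1 - Pi y Aᶜ}

lemma one_sub_lt_one_sub_iff {a b : ℝ≥0∞} (ha : a ≤ 1) (hb : b ≤ 1) :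
    1 - a < 1 - b ↔ b < a := by
  constructor
  · intro h
    by_contra hab
    exact absurd (tsub_le_tsub_left (not_lt.1 hab) 1) (not_le.2 h)
  · intro h
    exact (ENNReal.cancel_of_ne (tsub_le_self.trans_lt ENNReal.one_lt_top).ne).tsub_lt_tsub_left_of_le ha h

/-- Theorem 1, Part 2: under strong validity, the non-coverage event of the plausibility
region equals `{π_y(θ) < α}`, and its joint probability under any `Q ⊗ P`, `Q ∈ 𝒬`,
is at most `α`; i.e., `C_α` is a `100(1-α)%` confidence region relative to `𝒬`. -/
theorem stmt1 {𝕋 𝕐 : Type*} [MeasurableSpace 𝕋] [MeasurableSpace 𝕐]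
    (P : Kernel 𝕋 𝕐) [IsMarkovKernel P]
    (𝒬 : Set (Measure 𝕋)) (h𝒬 : ∀ Q ∈ 𝒬, IsProbabilityMeasure Q)
    (Pi : 𝕐 → Set 𝕋 → ℝ≥0∞)
    (hmono : ∀ y : 𝕐, ∀ A B : Set 𝕋, A ⊆ B → Pi y A ≤ Pi y B)
    (hempty : ∀ y, Pi y (∅ : Set 𝕋) = 0) (huniv : ∀ y, Pi y (univ : Set 𝕋) = 1)
    (hle1 : ∀ y A, Pi y A ≤ 1)
    (hmeas : ∀ β : ℝ≥0∞, β ≤ 1 → MeasurableSet {p : 𝕋 × 𝕐 | Pi p.2 {p.1} ≤ β})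
    (hvalid : ∀ Q ∈ 𝒬, ∀ β : ℝ≥0∞, β ≤ 1 →
      (Q ⊗ₘ P) {p : 𝕋 × 𝕐 | Pi p.2 {p.1} ≤ β} ≤ β)
    (α : ℝ≥0∞) (hα : α ≤ 1) :
    {p : 𝕋 × 𝕐 | p.1 ∉ plausRegion Pi α p.2} = {p : 𝕋 × 𝕐 | Pi p.2 {p.1} < α} ∧
      ∀ Q ∈ 𝒬, (Q ⊗ₘ P) {p : 𝕋 × 𝕐 | p.1 ∉ plausRegion Pi α p.2} ≤ α := by
  have hset : {p : 𝕋 × 𝕐 | p.1 ∉ plausRegion Pi α p.2}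
      = {p : 𝕋 × 𝕐 | Pi p.2 {p.1} < α} := by
    ext ⟨θ, y⟩
    simp only [mem_setOf_eq, plausRegion, mem_sInter, not_forall]
    constructor
    · rintro ⟨A, hA, hθA⟩
      rw [one_sub_lt_one_sub_iff hα (hle1 _ _)] at hA
      exact lt_of_le_of_lt (hmono y {θ} Aᶜ (by simpa using hθA)) hA
    · intro h
      refine ⟨{θ}ᶜ, ?_, by simp⟩
      rw [compl_compl, one_sub_lt_one_sub_iff hα (hle1 _ _)]
      exact h
  refine ⟨hset, fun Q hQ => ?_⟩
  rw [hset]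
  rcases eq_or_ne α 0 with rfl | hα0
  · simp
  · obtain ⟨u, humono, hulub, hutend⟩ := exists_seq_strictMono_tendsto' hα0.bot_lt
    have hcup : {p : 𝕋 × 𝕐 | Pi p.2 {p.1} < α} = ⋃ n, {p : 𝕋 × 𝕐 | Pi p.2 {p.1} ≤ u n} := by
      ext p
      simp only [mem_setOf_eq, mem_iUnion]
      constructor
      · intro h
        obtain ⟨n, hn⟩ := ((hutend.eventually (eventually_gt_nhds h)).exists)
        exact ⟨n, hn.le⟩
      · rintro ⟨n, hn⟩
        exact lt_of_le_of_lt hn (hulub n).2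
    rw [hcup]
    have hm : Monotone fun n => {p : 𝕋 × 𝕐 | Pi p.2 {p.1} ≤ u n} := by
      intro m n hmn p hp
      exact le_trans hp (humono.monotone hmn)
    rw [hm.measure_iUnion]
    exact iSup_le fun n => le_trans
      (hvalid Q hQ (u n) (le_trans (hulub n).2.le hα)) (hulub n).2.le
end

section
/- Let A ⊆ 𝕋 be measurable and let α ∈ [0,1] satisfy α < Q̄(A). Suppose y ↦ Π̄_y(A) is measurable and the IM experiences almost-sure contraction at A: P θ {y : Π̄_y(A) ≤ α} = 1 for every θ ∈ A. Then ⨆_{Q ∈ 𝒬} (Q ⊗ P){(θ,y) : Π̄_y(A) ≤ α and θ ∈ A} = Q̄(A) > α; in particular, the validity bound (that this upper joint probability be at most α) fails at A, so the IM is not 𝒜′-valid relative to 𝒬 for any collection 𝒜′ containing A. -/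
open MeasureTheory ProbabilityTheory Set
open scoped ENNReal

/-- Theorem 2: if the IM almost-surely contracts at `A` (for some `α < Q̄(A)`, the event
`Π̄_Y(A) ≤ α` has `P θ`-probability one for every `θ ∈ A`), then the upper joint
probability of `{Π̄_Y(A) ≤ α, Θ ∈ A}` equals `Q̄(A) > α`; in particular the validity
bound at `A` fails, so the IM is not `𝒜'`-valid for any `𝒜'` containing `A`. -/
theorem stmt2 {𝕋 𝕐 : Type*} [MeasurableSpace 𝕋] [MeasurableSpace 𝕐]
    (P : Kernel 𝕋 𝕐) [IsMarkovKernel P]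
    (𝒬 : Set (Measure 𝕋)) (h𝒬 : ∀ Q ∈ 𝒬, IsProbabilityMeasure Q)
    (Pi : 𝕐 → Set 𝕋 → ℝ≥0∞) (hle1 : ∀ y A, Pi y A ≤ 1)
    (A : Set 𝕋) (hA : MeasurableSet A)
    (hmeas : Measurable fun y => Pi y A)
    (α : ℝ≥0∞) (hα1 : α ≤ 1)
    (hαQ : α < ⨆ Q ∈ 𝒬, Q A)
    (hcontract : ∀ θ ∈ A, P θ {y | Pi y A ≤ α} = 1) :
    (⨆ Q ∈ 𝒬, (Q ⊗ₘ P) {p : 𝕋 × 𝕐 | Pi p.2 A ≤ α ∧ p.1 ∈ A}) = (⨆ Q ∈ 𝒬, Q A) ∧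
      α < ⨆ Q ∈ 𝒬, (Q ⊗ₘ P) {p : 𝕋 × 𝕐 | Pi p.2 A ≤ α ∧ p.1 ∈ A} := by
  have hS : MeasurableSet {p : 𝕋 × 𝕐 | Pi p.2 A ≤ α ∧ p.1 ∈ A} := by
    exact (measurableSet_le (hmeas.comp measurable_snd) measurable_const).inter
      (measurable_fst hA)
  have key : ∀ Q ∈ 𝒬, (Q ⊗ₘ P) {p : 𝕋 × 𝕐 | Pi p.2 A ≤ α ∧ p.1 ∈ A} = Q A := by
    intro Q hQ
    haveI := h𝒬 Q hQ
    rw [Measure.compProd_apply hS]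
    have : ∀ θ, P θ (Prod.mk θ ⁻¹' {p : 𝕋 × 𝕐 | Pi p.2 A ≤ α ∧ p.1 ∈ A})
        = A.indicator (fun _ => 1) θ := by
      intro θ
      by_cases hθ : θ ∈ A
      · have : Prod.mk θ ⁻¹' {p : 𝕋 × 𝕐 | Pi p.2 A ≤ α ∧ p.1 ∈ A} = {y | Pi y A ≤ α} := by
          ext y; simp [hθ]
        rw [this, hcontract θ hθ, indicator_of_mem hθ]
      · have : Prod.mk θ ⁻¹' {p : 𝕋 × 𝕐 | Pi p.2 A ≤ α ∧ p.1 ∈ A} = ∅ := by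
          ext y; simp [hθ]
        rw [this, measure_empty, indicator_of_notMem hθ]
    simp_rw [this]
    rw [lintegral_indicator hA]
    simp
  have heq : (⨆ Q ∈ 𝒬, (Q ⊗ₘ P) {p : 𝕋 × 𝕐 | Pi p.2 A ≤ α ∧ p.1 ∈ A}) = ⨆ Q ∈ 𝒬, Q A := by
    refine iSup_congr fun Q => ?_
    refine iSup_congr fun hQ => key Q hQ
  exact ⟨heq, heq ▸ hαQ⟩
end

section
/- Suppose the IM output is a probability measure: Π : 𝕐 → (probability measures on 𝕋), with y ↦ Π_y(A) measurable for each measurable A. Suppose there exist a nonempty measurable set A ⊆ 𝕋 and α < 1 such that P θ {y : Π_y(A) ≤ α} = 1 for every θ ∈ A. Then, with 𝒬 taken to be the set of ALL probability measures on 𝕋 (the vacuous prior), ⨆_{Q ∈ 𝒬} (Q ⊗ P){(θ,y) : Π_y(A) ≤ α and θ ∈ A} = 1 > α; hence the precise-probability IM fails to be valid relative to the vacuous prior. -/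
open MeasureTheory ProbabilityTheory Set
open scoped ENNReal

/-- Corollary 2 (a weak false confidence theorem): if the IM output is a probability
measure `Π_y` and there are a nonempty measurable `A ⊆ 𝕋` and `α < 1` with
`P θ {y : Π_y(A) ≤ α} = 1` for every `θ ∈ A`, then, with `𝒬` the set of all probability
measures on `𝕋` (the vacuous prior), the upper joint probability of
`{Π_Y(A) ≤ α, Θ ∈ A}` equals `1 > α`; hence the precise-probability IM is not valid
relative to the vacuous prior. -/
theorem stmt3 {𝕋 𝕐 : Type*} [MeasurableSpace 𝕋] [MeasurableSpace 𝕐]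
    [MeasurableSingletonClass 𝕋]
    (P : Kernel 𝕋 𝕐) [IsMarkovKernel P]
    (Pi : 𝕐 → Measure 𝕋) (hPiProb : ∀ y, IsProbabilityMeasure (Pi y))
    (hPimeas : ∀ B : Set 𝕋, MeasurableSet B → Measurable fun y => Pi y B)
    (A : Set 𝕋) (hAne : A.Nonempty) (hA : MeasurableSet A)
    (α : ℝ≥0∞) (hα : α < 1)
    (hcontract : ∀ θ ∈ A, P θ {y | Pi y A ≤ α} = 1) :
    (⨆ Q ∈ {Q : Measure 𝕋 | IsProbabilityMeasure Q},
        (Q ⊗ₘ P) {p : 𝕋 × 𝕐 | Pi p.2 A ≤ α ∧ p.1 ∈ A}) = 1 ∧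
      α < ⨆ Q ∈ {Q : Measure 𝕋 | IsProbabilityMeasure Q},
        (Q ⊗ₘ P) {p : 𝕋 × 𝕐 | Pi p.2 A ≤ α ∧ p.1 ∈ A} := by
  obtain ⟨θ₀, hθ₀⟩ := hAne
  have hSmeas : MeasurableSet {p : 𝕋 × 𝕐 | Pi p.2 A ≤ α ∧ p.1 ∈ A} := by
    apply MeasurableSet.inter
    · exact ((hPimeas A hA).comp measurable_snd) measurableSet_Iic
    · exact measurable_fst hA
  have hsup : (⨆ Q ∈ {Q : Measure 𝕋 | IsProbabilityMeasure Q},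
      (Q ⊗ₘ P) {p : 𝕋 × 𝕐 | Pi p.2 A ≤ α ∧ p.1 ∈ A}) = 1 := by
    apply le_antisymm
    · apply iSup₂_le
      intro Q hQ
      have : IsProbabilityMeasure Q := hQ
      exact prob_le_one
    · have h1 : IsProbabilityMeasure (Measure.dirac θ₀) := by infer_instance
      refine le_trans ?_ (le_iSup₂ (f := fun Q _ =>
        (Q ⊗ₘ P) {p : 𝕋 × 𝕐 | Pi p.2 A ≤ α ∧ p.1 ∈ A}) (Measure.dirac θ₀) h1)
      rw [Measure.dirac_compProd_apply hSmeas]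
      have : (Prod.mk θ₀ ⁻¹' {p : 𝕋 × 𝕐 | Pi p.2 A ≤ α ∧ p.1 ∈ A})
          = {y | Pi y A ≤ α} := by
        ext y; simp [hθ₀]
      rw [this, hcontract θ₀ hθ₀]
  exact ⟨hsup, hsup ▸ hα⟩
end

section
/- Let A ⊆ 𝕋 be measurable, let y ↦ Π̄_y(A) be measurable with 0 < Π̄_y(A) ≤ 1 for every y, and suppose that for every Q ∈ 𝒬 there exist a probability measure m_Q on 𝕐 and a Markov kernel ν_Q from 𝕐 to 𝕋 disintegrating the joint distribution, i.e., (Q ⊗ P).map Prod.swap = m_Q ⊗ ν_Q (so ν_Q(y) is the Bayesian posterior Q(· | y) and m_Q is the marginal distribution of Y under prior Q). If the dominance condition ∫ ν_Q(y)(A) / Π̄_y(A) dm_Q(y) ≤ 1 holds for every Q ∈ 𝒬, then for every α ∈ [0,1]: ⨆_{Q ∈ 𝒬} (Q ⊗ P){(θ,y) : Π̄_y(A) ≤ α and θ ∈ A} ≤ α. -/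
open MeasureTheory ProbabilityTheory Set
open scoped ENNReal

/-- Proposition 1: if, for every prior `Q` in the credal set `𝒬`, the joint distribution
disintegrates as `(Q ⊗ P).map Prod.swap = m_Q ⊗ ν_Q` (posterior `ν_Q(y) = Q(· | y)`,
marginal `m_Q`), and the dominance condition `∫ ν_Q(y)(A) / Π̄_y(A) dm_Q(y) ≤ 1` holds
for every `Q ∈ 𝒬`, then the IM is valid at `A` relative to `𝒬`: for every `α ∈ [0,1]`,
`⨆_{Q ∈ 𝒬} (Q ⊗ P){(θ,y) : Π̄_y(A) ≤ α ∧ θ ∈ A} ≤ α`. -/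
theorem stmt4 {𝕋 𝕐 : Type*} [MeasurableSpace 𝕋] [MeasurableSpace 𝕐]
    (P : Kernel 𝕋 𝕐) [IsMarkovKernel P]
    (𝒬 : Set (Measure 𝕋)) (h𝒬 : ∀ Q ∈ 𝒬, IsProbabilityMeasure Q)
    (Pi : 𝕐 → Set 𝕋 → ℝ≥0∞)
    (A : Set 𝕋) (hA : MeasurableSet A)
    (hmeas : Measurable fun y => Pi y A)
    (hpos : ∀ y, 0 < Pi y A) (hle1 : ∀ y, Pi y A ≤ 1)
    (m : Measure 𝕋 → Measure 𝕐) (ν : Measure 𝕋 → Kernel 𝕐 𝕋)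
    (hm : ∀ Q ∈ 𝒬, IsProbabilityMeasure (m Q))
    (hν : ∀ Q ∈ 𝒬, IsMarkovKernel (ν Q))
    (hdisint : ∀ Q ∈ 𝒬, (Q ⊗ₘ P).map Prod.swap = (m Q) ⊗ₘ (ν Q))
    (hdom : ∀ Q ∈ 𝒬, ∫⁻ y, (ν Q) y A / Pi y A ∂(m Q) ≤ 1)
    (α : ℝ≥0∞) (hα : α ≤ 1) :
    (⨆ Q ∈ 𝒬, (Q ⊗ₘ P) {p : 𝕋 × 𝕐 | Pi p.2 A ≤ α ∧ p.1 ∈ A}) ≤ α := by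
  refine iSup₂_le fun Q hQ => ?_
  have hQprob := h𝒬 Q hQ
  have hmprob := hm Q hQ
  have hνmk := hν Q hQ
  set S : Set 𝕐 := {y | Pi y A ≤ α} with hS
  have hSmeas : MeasurableSet S := hmeas measurableSet_Iic
  have hset : {p : 𝕋 × 𝕐 | Pi p.2 A ≤ α ∧ p.1 ∈ A} = Prod.swap ⁻¹' (S ×ˢ A) := by
    ext p; simp [hS, and_comm]
  rw [hset, ← Measure.map_apply measurable_swap (hSmeas.prod hA), hdisint Q hQ,
    Measure.compProd_apply (hSmeas.prod hA)]
  calc ∫⁻ y, ν Q y (Prod.mk y ⁻¹' (S ×ˢ A)) ∂(m Q)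
      ≤ ∫⁻ y, (ν Q y A / Pi y A) * α ∂(m Q) := by
        refine lintegral_mono fun y => ?_
        by_cases hy : y ∈ S
        · have hpre : Prod.mk y ⁻¹' (S ×ˢ A) = A := by ext θ; simp [hy]
          rw [hpre]
          calc ν Q y A = (ν Q y A / Pi y A) * Pi y A :=
              (ENNReal.div_mul_cancel (hpos y).ne'
                (lt_of_le_of_lt (hle1 y) ENNReal.one_lt_top).ne).symm
            _ ≤ (ν Q y A / Pi y A) * α := mul_le_mul_right hy _
        · have hpre : Prod.mk y ⁻¹' (S ×ˢ A) = ∅ := by ext θ; simp [hy]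
          simp [hpre]
    _ = (∫⁻ y, ν Q y A / Pi y A ∂(m Q)) * α := by
        exact lintegral_mul_const _ ((Kernel.measurable_coe (ν Q) hA).div hmeas)
    _ ≤ 1 * α := mul_le_mul_left (hdom Q hQ) _
    _ = α := one_mul α
end

section
/- Suppose that for every Q ∈ 𝒬 there exist a probability measure m_Q on 𝕐 and a Markov kernel ν_Q from 𝕐 to 𝕋 with (Q ⊗ P).map Prod.swap = m_Q ⊗ ν_Q (so ν_Q(y) is the Bayesian posterior Q(· | y)). Define the generalized-Bayes upper probability Π̄_y(A) = ⨆_{Q ∈ 𝒬} ν_Q(y)(A). Let A ⊆ 𝕋 be measurable and assume y ↦ Π̄_y(A) is measurable. Then for every α ∈ [0,1]: ⨆_{Q ∈ 𝒬} (Q ⊗ P){(θ,y) : Π̄_y(A) ≤ α and θ ∈ A} ≤ α; i.e., the generalized Bayes IM is valid relative to 𝒬. -/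
open MeasureTheory ProbabilityTheory Set
open scoped ENNReal

/-- Corollary 3 (validity of the generalized Bayes rule): if, for each `Q ∈ 𝒬`, the joint
distribution disintegrates as `(Q ⊗ P).map Prod.swap = m_Q ⊗ ν_Q`, then the
generalized-Bayes upper probability `Π̄_y(A) = ⨆_{Q ∈ 𝒬} ν_Q(y)(A)` is valid relative to
`𝒬`: for every `α ∈ [0,1]`,
`⨆_{Q ∈ 𝒬} (Q ⊗ P){(θ,y) : Π̄_y(A) ≤ α ∧ θ ∈ A} ≤ α`. -/
theorem stmt5 {𝕋 𝕐 : Type*} [MeasurableSpace 𝕋] [MeasurableSpace 𝕐]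
    (P : Kernel 𝕋 𝕐) [IsMarkovKernel P]
    (𝒬 : Set (Measure 𝕋)) (h𝒬 : ∀ Q ∈ 𝒬, IsProbabilityMeasure Q)
    (m : Measure 𝕋 → Measure 𝕐) (ν : Measure 𝕋 → Kernel 𝕐 𝕋)
    (hm : ∀ Q ∈ 𝒬, IsProbabilityMeasure (m Q))
    (hν : ∀ Q ∈ 𝒬, IsMarkovKernel (ν Q))
    (hdisint : ∀ Q ∈ 𝒬, (Q ⊗ₘ P).map Prod.swap = (m Q) ⊗ₘ (ν Q))
    (A : Set 𝕋) (hA : MeasurableSet A)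
    (hmeas : Measurable fun y => ⨆ Q ∈ 𝒬, (ν Q) y A)
    (α : ℝ≥0∞) (hα : α ≤ 1) :
    (⨆ Q ∈ 𝒬, (Q ⊗ₘ P) {p : 𝕋 × 𝕐 | (⨆ Q' ∈ 𝒬, (ν Q') p.2 A) ≤ α ∧ p.1 ∈ A}) ≤ α := by
  refine iSup₂_le fun Q hQ => ?_
  haveI := h𝒬 Q hQ
  haveI := hm Q hQ
  haveI := hν Q hQ
  set g : 𝕐 → ℝ≥0∞ := fun y => ⨆ Q' ∈ 𝒬, (ν Q') y A with hg
  set T : Set (𝕐 × 𝕋) := {p : 𝕐 × 𝕋 | g p.1 ≤ α ∧ p.2 ∈ A} with hT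
  have hTm : MeasurableSet T :=
    ((hmeas.comp measurable_fst) measurableSet_Iic).inter (measurable_snd hA)
  have hswap : {p : 𝕋 × 𝕐 | g p.2 ≤ α ∧ p.1 ∈ A} = Prod.swap ⁻¹' T := by
    ext p; simp [T, and_comm]
  have h1 : (Q ⊗ₘ P) {p : 𝕋 × 𝕐 | g p.2 ≤ α ∧ p.1 ∈ A} = ((m Q) ⊗ₘ (ν Q)) T := by
    rw [hswap, ← Measure.map_apply measurable_swap hTm, hdisint Q hQ]
  rw [h1, Measure.compProd_apply hTm]
  have hbound : ∀ y, (ν Q) y (Prod.mk y ⁻¹' T) ≤ α := by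
    intro y
    by_cases hy : g y ≤ α
    · have : Prod.mk y ⁻¹' T = A := by ext θ; simp [T, hy]
      rw [this]
      refine le_trans ?_ hy
      exact le_biSup (fun Q' => (ν Q') y A) hQ
    · have : Prod.mk y ⁻¹' T = ∅ := by ext θ; simp [T, hy]
      simp [this]
  calc ∫⁻ y, (ν Q) y (Prod.mk y ⁻¹' T) ∂(m Q) ≤ ∫⁻ _, α ∂(m Q) :=
        lintegral_mono hbound
    _ = α := by simp
end

section
/- Let Q be a probability measure on 𝕋 and suppose there exist a probability measure m on 𝕐 and a Markov kernel ν from 𝕐 to 𝕋 with (Q ⊗ P).map Prod.swap = m ⊗ ν (so ν(y) is the Bayesian posterior distribution of the parameter given Y = y and m is the marginal distribution of Y). Then for every measurable A ⊆ 𝕋 and every α ∈ [0,1]: (Q ⊗ P){(θ,y) : ν(y)(A) ≤ α and θ ∈ A} ≤ α; i.e., the classical Bayesian posterior, viewed as an IM, is valid relative to the singleton credal set {Q}. -/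
open MeasureTheory ProbabilityTheory Set
open scoped ENNReal

/-- The single-prior special case of Corollary 3: if the joint distribution disintegrates
as `(Q ⊗ P).map Prod.swap = m ⊗ ν` (so `ν(y)` is the Bayesian posterior and `m` the
marginal of the data), then the Bayesian posterior, viewed as an IM, is valid relative to
`{Q}`: for every measurable `A` and `α ∈ [0,1]`,
`(Q ⊗ₘ P){(θ,y) : ν(y)(A) ≤ α ∧ θ ∈ A} ≤ α`. -/
theorem stmt6 {𝕋 𝕐 : Type*} [MeasurableSpace 𝕋] [MeasurableSpace 𝕐]
    (P : Kernel 𝕋 𝕐) [IsMarkovKernel P]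
    (Q : Measure 𝕋) [IsProbabilityMeasure Q]
    (m : Measure 𝕐) [IsProbabilityMeasure m]
    (ν : Kernel 𝕐 𝕋) [IsMarkovKernel ν]
    (hdisint : (Q ⊗ₘ P).map Prod.swap = m ⊗ₘ ν)
    (A : Set 𝕋) (hA : MeasurableSet A)
    (α : ℝ≥0∞) (hα : α ≤ 1) :
    (Q ⊗ₘ P) {p : 𝕋 × 𝕐 | ν p.2 A ≤ α ∧ p.1 ∈ A} ≤ α := by
  set T : Set (𝕐 × 𝕋) := {q : 𝕐 × 𝕋 | ν q.1 A ≤ α ∧ q.2 ∈ A} with hT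
  have hmeas : MeasurableSet T := by
    apply MeasurableSet.inter
    · exact ((ν.measurable_coe hA).comp measurable_fst) measurableSet_Iic
    · exact measurable_snd hA
  have hpre : {p : 𝕋 × 𝕐 | ν p.2 A ≤ α ∧ p.1 ∈ A} = Prod.swap ⁻¹' T := rfl
  have h1 : (Q ⊗ₘ P) {p : 𝕋 × 𝕐 | ν p.2 A ≤ α ∧ p.1 ∈ A} = (m ⊗ₘ ν) T := by
    rw [hpre, ← hdisint, Measure.map_apply measurable_swap hmeas]
  rw [h1, Measure.compProd_apply hmeas]
  calc ∫⁻ y, ν y (Prod.mk y ⁻¹' T) ∂m ≤ ∫⁻ _, α ∂m := by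
        refine lintegral_mono fun y => ?_
        by_cases h : ν y A ≤ α
        · have : Prod.mk y ⁻¹' T ⊆ A := fun t ht => ht.2
          exact le_trans (measure_mono this) h
        · have : Prod.mk y ⁻¹' T = ∅ := by
            ext t; simp [T, h]
          simp [this]
    _ = α := by simp
end

section
/- Let A ⊆ 𝕋 be measurable with Q̄(A) > 0. Let f : 𝕐 → [0,1] be measurable (f(y) is the vacuous-prior IM's upper probability Π̄⁰_y(A)) and suppose it satisfies vacuous-prior validity at A: P θ {y : f(y) ≤ t} ≤ t for every t ∈ [0,1] and every θ ∈ A. Let g : 𝕐 → [0,1] be measurable (g(y) is the partial-prior IM's upper probability Π̄_y(A)) and suppose the assertion-wise dominance g(y) ≥ f(y) · Q̄(A) holds for every y ∈ 𝕐. Then for every α ∈ [0,1]: ⨆_{Q ∈ 𝒬} (Q ⊗ P){(θ,y) : g(y) ≤ α and θ ∈ A} ≤ α. -/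
open MeasureTheory ProbabilityTheory Set
open scoped ENNReal

/-- Proposition 2 (assertion-wise dominance implies validity at `A`): if
`f y = Π̄⁰_y(A)` is a vacuous-prior-valid upper probability at `A`, `Q̄(A) > 0` where
`Q̄(A) = ⨆_{Q ∈ 𝒬} Q(A)`, and the partial-prior IM `g y = Π̄_y(A)` satisfies
`g(y) ≥ f(y) · Q̄(A)` for all `y`, then for every `α ∈ [0,1]`,
`⨆_{Q ∈ 𝒬} (Q ⊗ P){(θ,y) : g(y) ≤ α ∧ θ ∈ A} ≤ α`. -/
theorem stmt7 {𝕋 𝕐 : Type*} [MeasurableSpace 𝕋] [MeasurableSpace 𝕐]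
    (P : Kernel 𝕋 𝕐) [IsMarkovKernel P]
    (𝒬 : Set (Measure 𝕋)) (h𝒬 : ∀ Q ∈ 𝒬, IsProbabilityMeasure Q)
    (A : Set 𝕋) (hA : MeasurableSet A)
    (hQbar : 0 < ⨆ Q ∈ 𝒬, Q A)
    (f : 𝕐 → ℝ≥0∞) (hfmeas : Measurable f) (hf1 : ∀ y, f y ≤ 1)
    (hfvalid : ∀ θ ∈ A, ∀ t : ℝ≥0∞, t ≤ 1 → P θ {y | f y ≤ t} ≤ t)
    (g : 𝕐 → ℝ≥0∞) (hgmeas : Measurable g) (hg1 : ∀ y, g y ≤ 1)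
    (hdom : ∀ y, f y * (⨆ Q ∈ 𝒬, Q A) ≤ g y)
    (α : ℝ≥0∞) (hα : α ≤ 1) :
    (⨆ Q ∈ 𝒬, (Q ⊗ₘ P) {p : 𝕋 × 𝕐 | g p.2 ≤ α ∧ p.1 ∈ A}) ≤ α := by
  set c : ℝ≥0∞ := ⨆ Q ∈ 𝒬, Q A with hc
  have hc1 : c ≤ 1 := by
    refine iSup₂_le fun Q hQ => ?_
    haveI := h𝒬 Q hQ
    exact prob_le_one
  have hc0 : c ≠ 0 := hQbar.ne'
  have hctop : c ≠ ⊤ := (lt_of_le_of_lt hc1 (by norm_num)).ne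
  refine iSup₂_le fun Q hQ => ?_
  haveI := h𝒬 Q hQ
  have hs : MeasurableSet {p : 𝕋 × 𝕐 | g p.2 ≤ α ∧ p.1 ∈ A} :=
    (measurableSet_le (hgmeas.comp measurable_snd) measurable_const).inter
      (measurable_fst hA)
  rw [Measure.compProd_apply hs]
  have key : ∀ θ, P θ (Prod.mk θ ⁻¹' {p : 𝕋 × 𝕐 | g p.2 ≤ α ∧ p.1 ∈ A})
      ≤ A.indicator (fun _ => α / c) θ := by
    intro θ
    by_cases hθ : θ ∈ A
    · rw [Set.indicator_of_mem hθ]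
      have hsub : Prod.mk θ ⁻¹' {p : 𝕋 × 𝕐 | g p.2 ≤ α ∧ p.1 ∈ A}
          ⊆ {y | f y ≤ α / c} := by
        intro y hy
        have hmul : f y * c ≤ α := (hdom y).trans hy.1
        exact (ENNReal.le_div_iff_mul_le (Or.inl hc0) (Or.inl hctop)).mpr hmul
      refine (measure_mono hsub).trans ?_
      by_cases hd : α / c ≤ 1
      · exact hfvalid θ hθ _ hd
      · exact prob_le_one.trans (le_of_not_ge hd)
    · rw [Set.indicator_of_notMem hθ]
      have : Prod.mk θ ⁻¹' {p : 𝕋 × 𝕐 | g p.2 ≤ α ∧ p.1 ∈ A} = ∅ := by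
        ext y; simp [hθ]
      simp [this]
  calc ∫⁻ θ, P θ (Prod.mk θ ⁻¹' {p : 𝕋 × 𝕐 | g p.2 ≤ α ∧ p.1 ∈ A}) ∂Q
      ≤ ∫⁻ θ, A.indicator (fun _ => α / c) θ ∂Q := lintegral_mono key
    _ = (α / c) * Q A := by
        rw [lintegral_indicator hA]
        simp [mul_comm]
    _ ≤ (α / c) * c := by
        gcongr
        exact le_iSup₂ (f := fun (Q : Measure 𝕋) (_ : Q ∈ 𝒬) => Q A) Q hQ
    _ = α := ENNReal.div_mul_cancel hc0 hctop
end

section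
/- Let π : 𝕐 × 𝕋 → [0,1] be measurable (the vacuous-prior IM's plausibility contour) with P θ {y : π(y,θ) ≤ t} ≤ t for every θ ∈ 𝕋 and t ∈ [0,1]. Let q : 𝕋 → [0,1] be measurable (the prior plausibility contour) with Q {θ : q(θ) ≤ t} ≤ t for every Q ∈ 𝒬 and t ∈ [0,1]. Fix w ∈ (0,1) and define the aggregated contour π_𝒬(y,θ) = min(1, min((1−w)⁻¹ · π(y,θ), w⁻¹ · q(θ))). Then for every Q ∈ 𝒬 and every α ∈ [0,1]: (Q ⊗ P){(θ,y) : π_𝒬(y,θ) ≤ α} ≤ α; i.e., the information-aggregation IM is strongly valid relative to 𝒬. -/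
open MeasureTheory ProbabilityTheory Set
open scoped ENNReal

/-- Proposition 3 (strong validity of the information-aggregation rule): if the
vacuous-prior contour `π` and the prior contour `q` are each calibrated
(`P θ {y : π(y,θ) ≤ t} ≤ t` and `Q {θ : q(θ) ≤ t} ≤ t` for all `Q ∈ 𝒬`), then for any
weight `w ∈ (0,1)` the aggregated contour
`π_𝒬(y,θ) = min(1, min((1-w)⁻¹ π(y,θ), w⁻¹ q(θ)))` is strongly valid relative to `𝒬`. -/
theorem stmt8 {𝕋 𝕐 : Type*} [MeasurableSpace 𝕋] [MeasurableSpace 𝕐]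
    (P : Kernel 𝕋 𝕐) [IsMarkovKernel P]
    (𝒬 : Set (Measure 𝕋)) (h𝒬 : ∀ Q ∈ 𝒬, IsProbabilityMeasure Q)
    (π : 𝕐 × 𝕋 → ℝ≥0∞) (hπmeas : Measurable π) (hπ1 : ∀ p, π p ≤ 1)
    (hπvalid : ∀ θ : 𝕋, ∀ t : ℝ≥0∞, t ≤ 1 → P θ {y | π (y, θ) ≤ t} ≤ t)
    (q : 𝕋 → ℝ≥0∞) (hqmeas : Measurable q) (hq1 : ∀ θ, q θ ≤ 1)
    (hqvalid : ∀ Q ∈ 𝒬, ∀ t : ℝ≥0∞, t ≤ 1 → Q {θ | q θ ≤ t} ≤ t)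
    (w : ℝ≥0∞) (hw0 : 0 < w) (hw1 : w < 1)
    (Q : Measure 𝕋) (hQ : Q ∈ 𝒬) (α : ℝ≥0∞) (hα : α ≤ 1) :
    (Q ⊗ₘ P) {p : 𝕋 × 𝕐 |
      min 1 (min ((1 - w)⁻¹ * π (p.2, p.1)) (w⁻¹ * q p.1)) ≤ α} ≤ α := by
  haveI := h𝒬 Q hQ
  rcases eq_or_lt_of_le hα with hα1 | hαlt
  · subst hα1
    calc (Q ⊗ₘ P) _ ≤ (Q ⊗ₘ P) univ := measure_mono (subset_univ _)
    _ = 1 := measure_univ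
  have hw' : w ≠ ∞ := hw1.trans_le le_top |>.ne
  have h1w0 : (1 - w) ≠ 0 := by
    simp [tsub_eq_zero_iff_le, not_le.2 hw1]
  have h1wtop : (1 - w) ≠ ∞ := (tsub_le_self.trans_lt (lt_top_iff_ne_top.2 ENNReal.one_ne_top)).ne
  -- subset of union
  set A : Set (𝕋 × 𝕐) := {p | π (p.2, p.1) ≤ (1 - w) * α} with hA
  set B : Set (𝕋 × 𝕐) := {p | q p.1 ≤ w * α} with hB
  have hsub : {p : 𝕋 × 𝕐 |
      min 1 (min ((1 - w)⁻¹ * π (p.2, p.1)) (w⁻¹ * q p.1)) ≤ α} ⊆ A ∪ B := by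
    intro p hp
    simp only [mem_setOf_eq, min_le_iff] at hp
    rcases hp with h | h
    · exact absurd h (not_le.2 hαlt)
    rcases h with h | h
    · exact Or.inl ((ENNReal.inv_mul_le_iff h1w0 h1wtop).1 h)
    · exact Or.inr ((ENNReal.inv_mul_le_iff hw0.ne' hw').1 h)
  have hAmeas : MeasurableSet A :=
    measurableSet_le (hπmeas.comp (measurable_snd.prodMk measurable_fst)) measurable_const
  have hBmeas : MeasurableSet B :=
    measurableSet_le (hqmeas.comp measurable_fst) measurable_const
  have hwa1 : w * α ≤ 1 := mul_le_one' hw1.le hα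
  have h1wa1 : (1 - w) * α ≤ 1 := mul_le_one' tsub_le_self hα
  have hAbound : (Q ⊗ₘ P) A ≤ (1 - w) * α := by
    rw [Measure.compProd_apply hAmeas]
    calc ∫⁻ θ, P θ (Prod.mk θ ⁻¹' A) ∂Q ≤ ∫⁻ θ, (1 - w) * α ∂Q := by
          refine lintegral_mono fun θ => ?_
          have : Prod.mk θ ⁻¹' A = {y | π (y, θ) ≤ (1 - w) * α} := rfl
          rw [this]
          exact hπvalid θ _ h1wa1
      _ = (1 - w) * α := by simp
  have hBbound : (Q ⊗ₘ P) B ≤ w * α := by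
    rw [Measure.compProd_apply hBmeas]
    have : ∀ θ, P θ (Prod.mk θ ⁻¹' B) = Set.indicator {θ | q θ ≤ w * α} 1 θ := by
      intro θ
      by_cases h : q θ ≤ w * α
      · have : Prod.mk θ ⁻¹' B = univ := by
          ext y; simp [hB, h]
        rw [this]; simp [Set.indicator_of_mem, h, mem_setOf_eq]
      · have : Prod.mk θ ⁻¹' B = ∅ := by
          ext y; simp [hB, h]
        rw [this]; simp [Set.indicator_of_notMem, h, mem_setOf_eq]
    calc ∫⁻ θ, P θ (Prod.mk θ ⁻¹' B) ∂Q
        = ∫⁻ θ, Set.indicator {θ | q θ ≤ w * α} 1 θ ∂Q := by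
          exact lintegral_congr this
      _ = Q {θ | q θ ≤ w * α} := by
          rw [lintegral_indicator_one (measurableSet_le hqmeas measurable_const)]
      _ ≤ w * α := hqvalid Q hQ _ hwa1
  calc (Q ⊗ₘ P) _ ≤ (Q ⊗ₘ P) (A ∪ B) := measure_mono hsub
    _ ≤ (Q ⊗ₘ P) A + (Q ⊗ₘ P) B := measure_union_le _ _
    _ ≤ (1 - w) * α + w * α := add_le_add hAbound hBbound
    _ = α := by rw [← add_mul, tsub_add_cancel_of_le hw1.le, one_mul]
end

section
/- Let Π̄ be an IM output (each Π̄_y : Set 𝕋 → [0,1] monotone) with plausibility contour π_y(θ) = Π̄_y {θ}. Assume {(θ,y) : π_y(θ) ≤ α} is measurable for each α ∈ [0,1] and that the vacuous-prior uniformity condition holds: P θ {y : π_y(θ) ≤ α} ≤ α for every θ ∈ 𝕋 and α ∈ [0,1]. Then for EVERY probability measure Q on 𝕋 and every α ∈ [0,1]: (Q ⊗ P){(θ,y) : there exists A ⊆ 𝕋 with θ ∈ A and Π̄_y(A) ≤ α} ≤ α; i.e., the IM is strongly valid relative to any credal set 𝒬. -/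
open MeasureTheory ProbabilityTheory Set
open scoped ENNReal

/-- Proposition 4: a vacuous-prior IM whose plausibility contour `π_y(θ) = Π̄_y {θ}`
satisfies the uniformity condition `P θ {y : π_y(θ) ≤ α} ≤ α` is strongly valid relative
to every prior: for every probability measure `Q` on `𝕋` and every `α ∈ [0,1]`,
`(Q ⊗ P){(θ,y) : ∃ A ∋ θ, Π̄_y(A) ≤ α} ≤ α`. -/
theorem stmt9 {𝕋 𝕐 : Type*} [MeasurableSpace 𝕋] [MeasurableSpace 𝕐]
    (P : Kernel 𝕋 𝕐) [IsMarkovKernel P]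
    (Pi : 𝕐 → Set 𝕋 → ℝ≥0∞)
    (hmono : ∀ y : 𝕐, ∀ A B : Set 𝕋, A ⊆ B → Pi y A ≤ Pi y B)
    (hle1 : ∀ y A, Pi y A ≤ 1)
    (hmeas : ∀ α : ℝ≥0∞, α ≤ 1 → MeasurableSet {p : 𝕋 × 𝕐 | Pi p.2 {p.1} ≤ α})
    (hvalid : ∀ θ : 𝕋, ∀ α : ℝ≥0∞, α ≤ 1 → P θ {y | Pi y {θ} ≤ α} ≤ α)
    (Q : Measure 𝕋) [IsProbabilityMeasure Q]
    (α : ℝ≥0∞) (hα : α ≤ 1) :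
    (Q ⊗ₘ P) {p : 𝕋 × 𝕐 | ∃ A : Set 𝕋, p.1 ∈ A ∧ Pi p.2 A ≤ α} ≤ α := by
  have hset : {p : 𝕋 × 𝕐 | ∃ A : Set 𝕋, p.1 ∈ A ∧ Pi p.2 A ≤ α}
      = {p : 𝕋 × 𝕐 | Pi p.2 {p.1} ≤ α} := by
    ext p
    constructor
    · rintro ⟨A, hA, hle⟩
      exact le_trans (hmono p.2 {p.1} A (by simpa using hA)) hle
    · intro h
      exact ⟨{p.1}, rfl, h⟩
  rw [hset, Measure.compProd_apply (hmeas α hα)]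
  calc ∫⁻ θ, P θ (Prod.mk θ ⁻¹' {p : 𝕋 × 𝕐 | Pi p.2 {p.1} ≤ α}) ∂Q
      ≤ ∫⁻ _, α ∂Q := by
        refine lintegral_mono fun θ => ?_
        exact hvalid θ α hα
    _ = α := by simp
end

section
/- Suppose that for every measurable A ⊆ 𝕋 the map y ↦ Π̄_y(A) is measurable and the vacuous-prior validity bound holds: P θ {y : Π̄_y(A) ≤ α} ≤ α for every θ ∈ A and α ∈ [0,1]. Then for every probability measure Q on 𝕋, every measurable A ⊆ 𝕋, and every α ∈ [0,1]: ∫_A P θ {y : Π̄_y(A) ≤ α} dQ(θ) ≤ α · Q(A); equivalently, whenever Q(A) > 0, the conditional probability under the joint distribution Q ⊗ P that Π̄_Y(A) ≤ α, given that the parameter lies in A, is at most α (conditional validity relative to any credal set 𝒬). -/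
open MeasureTheory ProbabilityTheory Set
open scoped ENNReal

/-- Proposition 5 (conditional validity): if the IM satisfies the vacuous-prior validity
bound `P θ {y : Π̄_y(A) ≤ α} ≤ α` for all measurable `A`, `θ ∈ A` and `α ∈ [0,1]`, then
for every probability measure `Q` on `𝕋`, measurable `A` and `α ∈ [0,1]`,
`∫_A P θ {y : Π̄_y(A) ≤ α} dQ(θ) ≤ α · Q(A)`; equivalently, whenever `Q(A) > 0`, the
conditional probability under `Q ⊗ P` that `Π̄_Y(A) ≤ α`, given the parameter lies in
`A`, is at most `α`. -/
theorem stmt10 {𝕋 𝕐 : Type*} [MeasurableSpace 𝕋] [MeasurableSpace 𝕐]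
    (P : Kernel 𝕋 𝕐) [IsMarkovKernel P]
    (Pi : 𝕐 → Set 𝕋 → ℝ≥0∞)
    (hmeas : ∀ A : Set 𝕋, MeasurableSet A → Measurable fun y => Pi y A)
    (hvalid : ∀ A : Set 𝕋, MeasurableSet A → ∀ θ ∈ A, ∀ α : ℝ≥0∞, α ≤ 1 →
      P θ {y | Pi y A ≤ α} ≤ α)
    (Q : Measure 𝕋) [IsProbabilityMeasure Q]
    (A : Set 𝕋) (hA : MeasurableSet A)
    (α : ℝ≥0∞) (hα : α ≤ 1) :
    (∫⁻ θ in A, P θ {y | Pi y A ≤ α} ∂Q) ≤ α * Q A ∧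
      (0 < Q A →
        (Q ⊗ₘ P) {p : 𝕋 × 𝕐 | Pi p.2 A ≤ α ∧ p.1 ∈ A} / Q A ≤ α) := by
  have hint : (∫⁻ θ in A, P θ {y | Pi y A ≤ α} ∂Q) ≤ α * Q A := by
    calc (∫⁻ θ in A, P θ {y | Pi y A ≤ α} ∂Q)
        ≤ ∫⁻ _ in A, α ∂Q := by
          refine setLIntegral_mono_ae (by fun_prop) ?_
          filter_upwards with θ hθ using hvalid A hA θ hθ α hα
      _ = α * Q A := by simp [mul_comm]
  refine ⟨hint, fun hQA => ?_⟩
  have hs : MeasurableSet {p : 𝕋 × 𝕐 | Pi p.2 A ≤ α ∧ p.1 ∈ A} := by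
    have : {p : 𝕋 × 𝕐 | Pi p.2 A ≤ α ∧ p.1 ∈ A}
        = (univ ×ˢ {y | Pi y A ≤ α}) ∩ (A ×ˢ univ) := by
      ext p; simp [and_comm]
    rw [this]
    exact (MeasurableSet.univ.prod ((hmeas A hA) measurableSet_Iic)).inter
      (hA.prod MeasurableSet.univ)
  have hcomp : (Q ⊗ₘ P) {p : 𝕋 × 𝕐 | Pi p.2 A ≤ α ∧ p.1 ∈ A}
      = ∫⁻ θ in A, P θ {y | Pi y A ≤ α} ∂Q := by
    rw [Measure.compProd_apply hs]
    rw [← lintegral_indicator hA]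
    congr 1
    ext θ
    by_cases hθ : θ ∈ A
    · simp only [indicator_of_mem hθ]
      congr 1
      ext y; simp [hθ]
    · simp only [indicator_of_notMem hθ]
      have : (Prod.mk θ ⁻¹' {p : 𝕋 × 𝕐 | Pi p.2 A ≤ α ∧ p.1 ∈ A}) = ∅ := by
        ext y; simp [hθ]
      simp [this]
  rw [hcomp]
  rw [ENNReal.div_le_iff hQA.ne' (measure_ne_top Q A)]
  exact hint
end

section
/- Let N ≥ 1, let T_1 ⊆ T_2 ⊆ ⋯ ⊆ T_N be nested nonempty measurable subsets of 𝕋 (the focal elements of the prior random set), and let m_1, …, m_N ≥ 0 with Σ_j m_j = 1 (the masses). Define the prior upper probability Q̄(B) = Σ_{j : T_j ∩ B ≠ ∅} m_j and the credal set 𝒬 = {Q a probability measure on 𝕋 : Q(B) ≤ Q̄(B) for every measurable B}. Let Π̄⁰ be a vacuous-prior IM output: each Π̄⁰_y : Set 𝕋 → [0,1] is monotone with Π̄⁰_y(∅) = 0, y ↦ Π̄⁰_y(B) is measurable for each measurable B, and validity holds at the assertion A below: P θ {y : Π̄⁰_y(A) ≤ t} ≤ t for every θ ∈ A and t ∈ [0,1].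 Define the Dempster's-rule combined upper probability Π̄^D_y(B) = (Σ_j m_j · Π̄⁰_y(B ∩ T_j)) / (Σ_j m_j · Π̄⁰_y(T_j)), and assume Σ_j m_j · Π̄⁰_y(T_j) > 0 for every y. Let A ⊆ 𝕋 be a nonempty measurable set for which there exists k such that A ∩ T_j = ∅ for all j < k and A ⊆ T_j for all j ≥ k. Then for every α ∈ [0,1]: ⨆_{Q ∈ 𝒬} (Q ⊗ P){(θ,y) : Π̄^D_y(A) ≤ α and θ ∈ A} ≤ α. -/
open MeasureTheory ProbabilityTheory Set Classical
open scoped ENNReal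

/-- The prior upper probability of the random set with focal elements `T 1, …, T N` and
masses `m 1, …, m N`: `Q̄(B) = ∑_{j : T j ∩ B ≠ ∅} m j`. -/
noncomputable def QbarRS {𝕋 : Type*} (N : ℕ) (T : Fin N → Set 𝕋) (m : Fin N → ℝ≥0∞)
    (B : Set 𝕋) : ℝ≥0∞ :=
  ∑ j, if (T j ∩ B).Nonempty then m j else 0

/-- Proposition 6: combining a valid vacuous-prior IM with a nested, finite-support
prior random set (focal elements `T 1 ⊆ ⋯ ⊆ T N`, masses `m j`) via Dempster's rule,
`Π̄^D_y(B) = (∑_j m_j Π̄⁰_y(B ∩ T_j)) / (∑_j m_j Π̄⁰_y(T_j))`, yields an IM that is valid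
at every assertion `A` lying in a single layer of the nested focal elements
(`A ∩ T j = ∅` for `j < k` and `A ⊆ T j` for `j ≥ k`), relative to the credal set
`𝒬 = {Q : Q(B) ≤ Q̄(B) for all measurable B}`. -/
theorem stmt12 {𝕋 𝕐 : Type*} [MeasurableSpace 𝕋] [MeasurableSpace 𝕐]
    (P : Kernel 𝕋 𝕐) [IsMarkovKernel P]
    (N : ℕ) (hN : 1 ≤ N)
    (T : Fin N → Set 𝕋)
    (hTnested : ∀ i j : Fin N, i ≤ j → T i ⊆ T j)
    (hTne : ∀ j, (T j).Nonempty) (hTmeas : ∀ j, MeasurableSet (T j))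
    (m : Fin N → ℝ≥0∞) (hm : ∑ j, m j = 1)
    (Pi0 : 𝕐 → Set 𝕋 → ℝ≥0∞)
    (hmono : ∀ y : 𝕐, ∀ B B' : Set 𝕋, B ⊆ B' → Pi0 y B ≤ Pi0 y B')
    (hempty : ∀ y, Pi0 y (∅ : Set 𝕋) = 0) (hle1 : ∀ y B, Pi0 y B ≤ 1)
    (hmeas : ∀ B : Set 𝕋, MeasurableSet B → Measurable fun y => Pi0 y B)
    (A : Set 𝕋) (hAne : A.Nonempty) (hAmeas : MeasurableSet A)
    (hvalid : ∀ θ ∈ A, ∀ t : ℝ≥0∞, t ≤ 1 → P θ {y | Pi0 y A ≤ t} ≤ t)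
    (hden : ∀ y, 0 < ∑ j, m j * Pi0 y (T j))
    (k : Fin N) (hk : ∀ j : Fin N, (j < k → A ∩ T j = ∅) ∧ (k ≤ j → A ⊆ T j))
    (α : ℝ≥0∞) (hα : α ≤ 1) :
    (⨆ Q ∈ {Q : Measure 𝕋 | IsProbabilityMeasure Q ∧
        ∀ B : Set 𝕋, MeasurableSet B → Q B ≤ QbarRS N T m B},
      (Q ⊗ₘ P) {p : 𝕋 × 𝕐 |
        (∑ j, m j * Pi0 p.2 (A ∩ T j)) / (∑ j, m j * Pi0 p.2 (T j)) ≤ α ∧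
          p.1 ∈ A}) ≤ α := by

  refine iSup₂_le ?_
  rintro Q ⟨hQprob, hQle⟩
  classical
  set w : ℝ≥0∞ := ∑ j, if k ≤ j then m j else 0 with hw
  have hw_le : w ≤ 1 := by
    rw [hw, ← hm]
    exact Finset.sum_le_sum fun j _ => by split <;> simp
  have hw_top : w ≠ ∞ := (lt_of_le_of_lt hw_le ENNReal.one_lt_top).ne
  have hAT : ∀ j, A ∩ T j = if k ≤ j then A else ∅ := by
    intro j
    rcases le_or_gt k j with h | h
    · simp [h, Set.inter_eq_left.2 ((hk j).2 h)]
    · simp [not_le.2 h, (hk j).1 h]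
  have hnum : ∀ y, (∑ j, m j * Pi0 y (A ∩ T j)) = w * Pi0 y A := by
    intro y
    rw [hw, Finset.sum_mul]
    refine Finset.sum_congr rfl fun j _ => ?_
    rw [hAT j]
    split <;> simp [hempty]
  have hQbarA : QbarRS N T m A = w := by
    unfold QbarRS
    rw [hw]
    refine Finset.sum_congr rfl fun j _ => ?_
    rcases le_or_gt k j with h | h
    · obtain ⟨x, hx⟩ := hAne
      have hne : (T j ∩ A).Nonempty := ⟨x, (hk j).2 h hx, hx⟩
      simp [h, hne]
    · have : T j ∩ A = ∅ := by rw [Set.inter_comm]; exact (hk j).1 h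
      simp [not_le.2 h, this]
  have hQA : Q A ≤ w := (hQle A hAmeas).trans_eq hQbarA
  -- the event in y
  set E : Set 𝕐 := {y | (∑ j, m j * Pi0 y (A ∩ T j)) / (∑ j, m j * Pi0 y (T j)) ≤ α}
    with hE
  have hEmeas : MeasurableSet E := by
    have h1 : Measurable fun y => ∑ j, m j * Pi0 y (A ∩ T j) :=
      Finset.measurable_sum _ fun j _ =>
        (hmeas _ (hAmeas.inter (hTmeas j))).const_mul _
    have h2 : Measurable fun y => ∑ j, m j * Pi0 y (T j) :=
      Finset.measurable_sum _ fun j _ => (hmeas _ (hTmeas j)).const_mul _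
    exact measurableSet_le (h1.div h2) measurable_const
  have hset : {p : 𝕋 × 𝕐 |
        (∑ j, m j * Pi0 p.2 (A ∩ T j)) / (∑ j, m j * Pi0 p.2 (T j)) ≤ α ∧
          p.1 ∈ A} = A ×ˢ E := by
    ext p; simp [hE, Set.mem_prod, and_comm]
  rw [hset, Measure.compProd_apply_prod hAmeas hEmeas]
  rcases eq_or_ne w 0 with hw0 | hw0
  · -- degenerate case : Q A = 0
    calc ∫⁻ θ in A, P θ E ∂Q ≤ ∫⁻ _ in A, 1 ∂Q :=
          setLIntegral_mono measurable_const fun θ _ => prob_le_one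
      _ = Q A := by simp
      _ ≤ α := by
          have : Q A = 0 := le_antisymm (hQA.trans_eq hw0) zero_le
          simp [this]
  · set t : ℝ≥0∞ := min (α / w) 1 with ht
    have hPE : ∀ θ ∈ A, P θ E ≤ t := by
      intro θ hθ
      have hsub : E ⊆ {y | Pi0 y A ≤ α / w} := by
        intro y hy
        have hdle : (∑ j, m j * Pi0 y (T j)) ≤ 1 := by
          rw [← hm]
          exact Finset.sum_le_sum fun j _ => by
            calc m j * Pi0 y (T j) ≤ m j * 1 :=
                  mul_le_mul_right (hle1 y _) _
              _ = m j := mul_one _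
        have hd0 : (∑ j, m j * Pi0 y (T j)) ≠ 0 := (hden y).ne'
        have hdtop : (∑ j, m j * Pi0 y (T j)) ≠ ∞ :=
          (lt_of_le_of_lt hdle ENNReal.one_lt_top).ne
        have hy' : (∑ j, m j * Pi0 y (A ∩ T j)) ≤ α * (∑ j, m j * Pi0 y (T j)) :=
          (ENNReal.div_le_iff hd0 hdtop).1 hy
        have hy'' : w * Pi0 y A ≤ α := by
          rw [← hnum y]
          exact hy'.trans (by
            calc α * (∑ j, m j * Pi0 y (T j)) ≤ α * 1 := mul_le_mul_right hdle _
              _ = α := mul_one _)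
        exact (ENNReal.le_div_iff_mul_le (Or.inl hw0) (Or.inl hw_top)).2
          (by rwa [mul_comm])
      rcases le_or_gt (α / w) 1 with hle | hlt
      · have := hvalid θ hθ (α / w) hle
        calc P θ E ≤ P θ {y | Pi0 y A ≤ α / w} := measure_mono hsub
          _ ≤ α / w := this
          _ = t := by rw [ht, min_eq_left hle]
      · calc P θ E ≤ 1 := prob_le_one
          _ = t := by rw [ht, min_eq_right hlt.le]
    calc ∫⁻ θ in A, P θ E ∂Q ≤ ∫⁻ _ in A, t ∂Q :=
          setLIntegral_mono measurable_const hPE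
      _ = t * Q A := by simp [mul_comm]
      _ ≤ (α / w) * w := mul_le_mul' (min_le_left _ _) hQA
      _ = α := ENNReal.div_mul_cancel hw0 hw_top
end

section
/- Let T_1 ⊆ T_2 ⊆ ⋯ ⊆ T_N be subsets of 𝕋 and m_1, …, m_N ≥ 0 with Σ_j m_j = 1. Let Φ : Set 𝕋 → ℝ be monotone (B ⊆ B' implies Φ(B) ≤ Φ(B')) with Φ(∅) = 0 and Φ(B) ≤ 1 for every B. Assume d := Σ_j m_j · Φ(T_j) > 0, and note d ≤ 1. Let A ⊆ 𝕋 be nonempty and suppose there exists k such that A ∩ T_j = ∅ for all j < k and A ⊆ T_j for all j ≥ k. Then (Σ_j m_j · Φ(A ∩ T_j)) / d ≥ Φ(A) · Σ_{j ≥ k} m_j, and moreover Σ_{j ≥ k} m_j = Σ_{j : T_j ∩ A ≠ ∅} m_j (the prior upper probability Q̄(A) of the random set with focal elements T_j and masses m_j). -/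
open Classical Set

/-- The key dominance inequality in the proof of Proposition 6: for a monotone set
function `Φ` with `Φ(∅) = 0` and `Φ ≤ 1`, nested sets `T 1 ⊆ ⋯ ⊆ T N`, nonnegative
masses summing to one, and a nonempty `A` contained in a single layer of the nested
focal elements, the Dempster's-rule combined upper probability satisfies
`(∑_j m_j Φ(A ∩ T_j)) / d ≥ Φ(A) · ∑_{j ≥ k} m_j`, where `0 < d := ∑_j m_j Φ(T_j) ≤ 1`;
moreover `∑_{j ≥ k} m_j = ∑_{j : T_j ∩ A ≠ ∅} m_j`, the prior upper probability
`Q̄(A)`. -/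
theorem stmt13 {𝕋 : Type*} (N : ℕ) (T : Fin N → Set 𝕋)
    (hTnested : ∀ i j : Fin N, i ≤ j → T i ⊆ T j)
    (m : Fin N → ℝ) (hm0 : ∀ j, 0 ≤ m j) (hm1 : ∑ j, m j = 1)
    (Φ : Set 𝕋 → ℝ)
    (hmono : ∀ B B' : Set 𝕋, B ⊆ B' → Φ B ≤ Φ B')
    (hempty : Φ (∅ : Set 𝕋) = 0) (hle1 : ∀ B, Φ B ≤ 1)
    (hd : 0 < ∑ j, m j * Φ (T j))
    (A : Set 𝕋) (hAne : A.Nonempty)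
    (k : Fin N) (hk : ∀ j : Fin N, (j < k → A ∩ T j = ∅) ∧ (k ≤ j → A ⊆ T j)) :
    (∑ j, m j * Φ (T j)) ≤ 1 ∧
      Φ A * (∑ j ∈ Finset.univ.filter fun j => k ≤ j, m j) ≤
        (∑ j, m j * Φ (A ∩ T j)) / (∑ j, m j * Φ (T j)) ∧
      (∑ j ∈ Finset.univ.filter fun j => k ≤ j, m j) =
        ∑ j ∈ Finset.univ.filter fun j => (T j ∩ A).Nonempty, m j := by
  have hd1 : (∑ j, m j * Φ (T j)) ≤ 1 := by
    calc (∑ j, m j * Φ (T j)) ≤ ∑ j, m j := by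
          apply Finset.sum_le_sum
          intro j _
          nlinarith [hm0 j, hle1 (T j)]
      _ = 1 := hm1
  refine ⟨hd1, ?_, ?_⟩
  · have hsum : (∑ j, m j * Φ (A ∩ T j)) =
        Φ A * (∑ j ∈ Finset.univ.filter fun j => k ≤ j, m j) := by
      rw [Finset.mul_sum]
      rw [← Finset.sum_filter_add_sum_filter_not Finset.univ (fun j => k ≤ j)]
      have h1 : ∀ j ∈ Finset.univ.filter fun j => k ≤ j,
          m j * Φ (A ∩ T j) = Φ A * m j := by
        intro j hj
        simp only [Finset.mem_filter] at hj
        have : A ∩ T j = A := inter_eq_left.mpr ((hk j).2 hj.2)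
        rw [this]; ring
      have h2 : ∀ j ∈ Finset.univ.filter fun j => ¬ k ≤ j,
          m j * Φ (A ∩ T j) = 0 := by
        intro j hj
        simp only [Finset.mem_filter] at hj
        rw [(hk j).1 (lt_of_not_ge hj.2), hempty, mul_zero]
      rw [Finset.sum_congr rfl h1, Finset.sum_congr rfl h2, Finset.sum_const_zero,
        add_zero]
    rw [hsum]
    have hnn : 0 ≤ Φ A * (∑ j ∈ Finset.univ.filter fun j => k ≤ j, m j) := by
      apply mul_nonneg
      · have := hmono ∅ A (empty_subset A); linarith
      · exact Finset.sum_nonneg fun j _ => hm0 j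
    rw [le_div_iff₀ hd]
    nlinarith
  · apply Finset.sum_congr _ (fun _ _ => rfl)
    apply Finset.filter_congr
    intro j _
    constructor
    · intro hkj
      obtain ⟨a, ha⟩ := hAne
      exact ⟨a, (hk j).2 hkj ha, ha⟩
    · intro hne
      by_contra h
      have := (hk j).1 (lt_of_not_ge h)
      rw [Set.inter_comm] at this
      exact hne.ne_empty this
end

section
/- Let h : 𝕐 × 𝕋 → ℝ be measurable and define the validified plausibility contour π_𝒬(y,θ) = ⨆_{Q ∈ 𝒬} (Q ⊗ P){(θ',y') : h(y',θ') ≤ h(y,θ)}. Then for every Q ∈ 𝒬 and every α ∈ [0,1]: (Q ⊗ P){(θ,y) : π_𝒬(y,θ) ≤ α} ≤ α; i.e., the consonant IM defined by π_𝒬 is strongly valid relative to 𝒬. (The event {(θ,y) : π_𝒬(y,θ) ≤ α} is measurable, since π_𝒬 is a monotone nondecreasing transform of the measurable function h, and it is contained in the measurable set {(θ,y) : (Q ⊗ P){h ≤ h(y,θ)} ≤ α}, whose (Q ⊗ P)-probability is at most α by the probability-integral-transform property of distribution functions.) -/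
open MeasureTheory ProbabilityTheory Set
open scoped ENNReal

/-- Probability integral transform bound: for any measure `ν` and measurable `g`,
the set where the "CDF at `g p`" is at most `α` has measure at most `α`. -/
lemma pit_aux {X : Type*} [MeasurableSpace X] (ν : Measure X) (g : X → ℝ)
    (_hg : Measurable g) (α : ℝ≥0∞) :
    ν {p | ν {q | g q ≤ g p} ≤ α} ≤ α := by
  set F : ℝ → ℝ≥0∞ := fun t => ν {q | g q ≤ t} with hF
  have hFmono : Monotone F := fun a b hab =>
    measure_mono (fun q hq => le_trans hq hab)
  set S : Set ℝ := {t | F t ≤ α} with hS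
  have hset : {p | ν {q | g q ≤ g p} ≤ α} = g ⁻¹' S := rfl
  rcases eq_empty_or_nonempty S with hSe | hSne
  · rw [hset, hSe]; simp
  by_cases hb : BddAbove S
  · set c := sSup S with hc
    by_cases hcS : F c ≤ α
    · calc ν {p | ν {q | g q ≤ g p} ≤ α} ≤ ν {q | g q ≤ c} :=
            measure_mono (fun p hp => le_csSup hb hp)
        _ ≤ α := hcS
    · have hsub : {p | ν {q | g q ≤ g p} ≤ α} ⊆ ⋃ n : ℕ, g ⁻¹' (Iic (c - 1/(n+1))) := by
        intro p hp
        have hmem : g p ∈ S := hp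
        have hlt : g p < c := by
          rcases lt_or_eq_of_le (le_csSup hb hmem) with h' | h'
          · exact h'
          · rw [h'] at hmem; exact absurd hmem hcS
        obtain ⟨n, hn⟩ := exists_nat_one_div_lt (sub_pos.mpr hlt)
        refine mem_iUnion.mpr ⟨n, ?_⟩
        simp only [mem_preimage, mem_Iic]
        have : (1 : ℝ)/(n+1) < c - g p := hn
        linarith
      have hmonoset : Monotone (fun n : ℕ => g ⁻¹' (Iic (c - 1/(n+1)))) := by
        intro m n hmn
        apply preimage_mono
        apply Iic_subset_Iic.mpr
        have : (1:ℝ)/(n+1) ≤ 1/(m+1) := by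
          apply one_div_le_one_div_of_le
          · positivity
          · have : (m:ℝ) ≤ n := Nat.cast_le.mpr hmn
            linarith
        linarith
      calc ν {p | ν {q | g q ≤ g p} ≤ α} ≤ ν (⋃ n : ℕ, g ⁻¹' (Iic (c - 1/(n+1)))) :=
            measure_mono hsub
        _ = ⨆ n : ℕ, ν (g ⁻¹' (Iic (c - 1/(n+1)))) :=
            hmonoset.directed_le.measure_iUnion
        _ ≤ α := by
            apply iSup_le
            intro n
            have hlt : c - 1/(n+1) < c := by
              have : (0:ℝ) < 1/(n+1) := by positivity
              linarith
            obtain ⟨s, hsS, hs⟩ := exists_lt_of_lt_csSup hSne hlt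
            exact le_trans (hFmono hs.le) hsS
  · have hsub : {p | ν {q | g q ≤ g p} ≤ α} ⊆ ⋃ n : ℕ, g ⁻¹' (Iic n) := by
      intro p _
      obtain ⟨n, hn⟩ := exists_nat_ge (g p)
      exact mem_iUnion.mpr ⟨n, hn⟩
    have hmonoset : Monotone (fun n : ℕ => g ⁻¹' (Iic (n : ℝ))) := by
      intro m n hmn
      exact preimage_mono (Iic_subset_Iic.mpr (by exact_mod_cast hmn))
    calc ν {p | ν {q | g q ≤ g p} ≤ α} ≤ ν (⋃ n : ℕ, g ⁻¹' (Iic (n:ℝ))) :=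
          measure_mono hsub
      _ = ⨆ n : ℕ, ν (g ⁻¹' (Iic (n:ℝ))) :=
          hmonoset.directed_le.measure_iUnion
      _ ≤ α := by
          apply iSup_le
          intro n
          obtain ⟨s, hsS, hs⟩ := (not_bddAbove_iff.mp hb) n
          exact le_trans (hFmono hs.le) hsS

/-- Proposition 8, Part 1 (validification): for any measurable `h : 𝕐 × 𝕋 → ℝ`, the
validified plausibility contour
`π_𝒬(y,θ) = ⨆_{Q ∈ 𝒬} (Q ⊗ P){(θ',y') : h(y',θ') ≤ h(y,θ)}` is strongly valid relative
to `𝒬`: for every `Q ∈ 𝒬` and `α ∈ [0,1]`,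
`(Q ⊗ P){(θ,y) : π_𝒬(y,θ) ≤ α} ≤ α`. -/
theorem stmt15 {𝕋 𝕐 : Type*} [MeasurableSpace 𝕋] [MeasurableSpace 𝕐]
    (P : Kernel 𝕋 𝕐) [IsMarkovKernel P]
    (𝒬 : Set (Measure 𝕋)) (h𝒬 : ∀ Q ∈ 𝒬, IsProbabilityMeasure Q)
    (h : 𝕐 × 𝕋 → ℝ) (hhmeas : Measurable h)
    (Q : Measure 𝕋) (hQ : Q ∈ 𝒬) (α : ℝ≥0∞) (hα : α ≤ 1) :
    (Q ⊗ₘ P) {p : 𝕋 × 𝕐 |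
      (⨆ Q' ∈ 𝒬, (Q' ⊗ₘ P) {p' : 𝕋 × 𝕐 | h (p'.2, p'.1) ≤ h (p.2, p.1)}) ≤ α} ≤ α := by
  set g : 𝕋 × 𝕐 → ℝ := fun p => h (p.2, p.1) with hg
  have hgmeas : Measurable g := hhmeas.comp (measurable_snd.prodMk measurable_fst)
  have hsub : {p : 𝕋 × 𝕐 |
      (⨆ Q' ∈ 𝒬, (Q' ⊗ₘ P) {p' : 𝕋 × 𝕐 | h (p'.2, p'.1) ≤ h (p.2, p.1)}) ≤ α} ⊆
      {p | (Q ⊗ₘ P) {q | g q ≤ g p} ≤ α} := by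
    intro p hp
    simp only [mem_setOf_eq] at hp ⊢
    refine le_trans ?_ hp
    exact le_iSup₂ (f := fun Q' (_ : Q' ∈ 𝒬) =>
      (Q' ⊗ₘ P) {p' : 𝕋 × 𝕐 | h (p'.2, p'.1) ≤ h (p.2, p.1)}) Q hQ
  exact le_trans (measure_mono hsub) (pit_aux (Q ⊗ₘ P) g hgmeas α)
end

section
/- Let (Ω, 𝒜, P) be a probability space, let α ∈ [0,1], set s = 1 − √(1−α), and let U, V : Ω → [0,1] be random variables such that P{U ≤ s} = s, P{V ≤ s} = s, and P{U ≤ s and V ≤ s} ≥ P{U ≤ s} · P{V ≤ s} (e.g., U and V independent, or suitably positively correlated). Then P{ min(1 − (1−U)², 1 − (1−V)²) ≤ α } ≤ α. -/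
open MeasureTheory Set
open scoped ENNReal

lemma key_iff (α s u : ℝ) (hα : α ∈ Icc (0 : ℝ) 1) (hs : s = 1 - Real.sqrt (1 - α))
    (hu : u ∈ Icc (0 : ℝ) 1) : 1 - (1 - u) ^ 2 ≤ α ↔ u ≤ s := by
  have h1α : (0:ℝ) ≤ 1 - α := by linarith [hα.2]
  have hsq : Real.sqrt (1 - α) ^ 2 = 1 - α := Real.sq_sqrt h1α
  have h1u : (0:ℝ) ≤ 1 - u := by linarith [hu.2]
  constructor
  · intro h
    have h2 : Real.sqrt (1 - α) ≤ 1 - u := by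
      have := Real.sqrt_le_sqrt (show (1 - α) ≤ (1 - u) ^ 2 by linarith)
      rwa [Real.sqrt_sq h1u] at this
    linarith [hs]
  · intro h
    have h2 : Real.sqrt (1 - α) ≤ 1 - u := by linarith [hs]
    nlinarith [Real.sqrt_nonneg (1 - α)]

/-- The strong-validity bound from the Remark of Section 5.2: if `U, V` are
`[0,1]`-valued random variables, `s = 1 - √(1-α)`, `P{U ≤ s} = s`, `P{V ≤ s} = s`, and
`P{U ≤ s, V ≤ s} ≥ P{U ≤ s}·P{V ≤ s}` (e.g., independence or positive correlation),
then `P{min(1-(1-U)², 1-(1-V)²) ≤ α} ≤ α`. -/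
theorem stmt17 {Ω : Type*} [MeasurableSpace Ω] (P : Measure Ω) [IsProbabilityMeasure P]
    (α : ℝ) (hα : α ∈ Icc (0 : ℝ) 1)
    (s : ℝ) (hs : s = 1 - Real.sqrt (1 - α))
    (U V : Ω → ℝ) (hUmeas : Measurable U) (hVmeas : Measurable V)
    (hU01 : ∀ ω, U ω ∈ Icc (0 : ℝ) 1) (hV01 : ∀ ω, V ω ∈ Icc (0 : ℝ) 1)
    (hU : P {ω | U ω ≤ s} = ENNReal.ofReal s)
    (hV : P {ω | V ω ≤ s} = ENNReal.ofReal s)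
    (hUV : P {ω | U ω ≤ s} * P {ω | V ω ≤ s} ≤ P {ω | U ω ≤ s ∧ V ω ≤ s}) :
    P {ω | min (1 - (1 - U ω) ^ 2) (1 - (1 - V ω) ^ 2) ≤ α} ≤ ENNReal.ofReal α := by
  have hsrange : Real.sqrt (1 - α) ≤ 1 := by
    have := Real.sqrt_le_sqrt (show (1 - α) ≤ 1 by linarith [hα.1])
    simpa using this
  have hs0 : 0 ≤ s := by rw [hs]; linarith
  have hαeq : α = 2 * s - s ^ 2 := by
    have h1α : (0:ℝ) ≤ 1 - α := by linarith [hα.2]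
    have hsq : Real.sqrt (1 - α) ^ 2 = 1 - α := Real.sq_sqrt h1α
    rw [hs]; nlinarith
  have hset : {ω | min (1 - (1 - U ω) ^ 2) (1 - (1 - V ω) ^ 2) ≤ α}
      = {ω | U ω ≤ s} ∪ {ω | V ω ≤ s} := by
    ext ω
    simp only [mem_setOf_eq, mem_union, min_le_iff]
    rw [key_iff α s (U ω) hα hs (hU01 ω), key_iff α s (V ω) hα hs (hV01 ω)]
  rw [hset]
  set A := {ω | U ω ≤ s}
  set B := {ω | V ω ≤ s}
  have hAmeas : MeasurableSet A := measurableSet_le hUmeas measurable_const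
  have hBmeas : MeasurableSet B := measurableSet_le hVmeas measurable_const
  have hAB : {ω | U ω ≤ s ∧ V ω ≤ s} = A ∩ B := rfl
  have hIE : P (A ∪ B) + P (A ∩ B) = P A + P B := measure_union_add_inter A hBmeas
  have hkey : P (A ∪ B) + P (A ∩ B) ≤ ENNReal.ofReal α + P (A ∩ B) := by
    rw [hIE, hU, hV]
    have h2 : ENNReal.ofReal (s ^ 2) ≤ P (A ∩ B) := by
      rw [← hAB]
      refine le_trans ?_ hUV
      rw [hU, hV, ← ENNReal.ofReal_mul hs0]
      exact le_of_eq (by ring_nf)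
    calc ENNReal.ofReal s + ENNReal.ofReal s
        = ENNReal.ofReal α + ENNReal.ofReal (s ^ 2) := by
          rw [← ENNReal.ofReal_add hs0 hs0,
            ← ENNReal.ofReal_add hα.1 (sq_nonneg s)]
          congr 1; linarith [hαeq]
      _ ≤ ENNReal.ofReal α + P (A ∩ B) := by gcongr
  exact (ENNReal.add_le_add_iff_right (measure_lt_top P (A ∩ B)).ne).mp hkey
end
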